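/- For coprime integers a, b both coprime to m ≥ 1, the Euler quotients satisfy Q_m(ab) ≡ Q_m(a) + Q_m(b) (mod m), where Q_m(x) = (x^φ(m) - 1)/m. -/

import Mathlib

lemma pow_totient_dvd (m : ℕ) (a : ℤ) (ha : IsCoprime a (m : ℤ)) :
    (m : ℤ) ∣ a ^ Nat.totient m - 1 := by
  have h : ((a ^ Nat.totient m - 1 : ℤ) : ZMod m) = 0 := by
    obtain ⟨u, v, huv⟩ := ha
    have hunit : IsUnit ((a : ZMod m)) := by
      refine IsUnit.of_mul_eq_one ((u : ℤ) : ZMod m) ?_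
      have := congrArg (fun x : ℤ => (x : ZMod m)) huv
      push_cast at this
      simpa [ZMod.natCast_self, mul_comm] using this
    obtain ⟨w, hw⟩ := hunit
    have := ZMod.pow_totient w
    push_cast
    rw [← hw, ← Units.val_pow_eq_pow_val, this, Units.val_one, sub_self]
  exact (ZMod.intCast_zmod_eq_zero_iff_dvd _ _).mp h

theorem euler_quotient_add (m : ℕ) (hm : 1 ≤ m) (a b : ℤ)
    (ha : IsCoprime a (m : ℤ)) (hb : IsCoprime b (m : ℤ)) :
    ((a * b) ^ Nat.totient m - 1) / m ≡
      (a ^ Nat.totient m - 1) / m + (b ^ Nat.totient m - 1) / m [ZMOD (m : ℤ)] := by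
  have hm0 : (m : ℤ) ≠ 0 := by positivity
  obtain ⟨x, hx⟩ := pow_totient_dvd m a ha
  obtain ⟨y, hy⟩ := pow_totient_dvd m b hb
  have hab : (a * b) ^ Nat.totient m - 1 = m * (x * m * y + x + y) := by
    have h1 : (a * b) ^ Nat.totient m = a ^ Nat.totient m * b ^ Nat.totient m :=
      mul_pow a b _
    have ha' : a ^ Nat.totient m = m * x + 1 := by linarith [hx]
    have hb' : b ^ Nat.totient m = m * y + 1 := by linarith [hy]
    rw [h1, ha', hb']; ring
  rw [hab, hx, hy, Int.mul_ediv_cancel_left _ hm0, Int.mul_ediv_cancel_left _ hm0,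
    Int.mul_ediv_cancel_left _ hm0]
  exact Int.modEq_iff_dvd.mpr ⟨-(x * y), by ring⟩
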